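/- The linear map U₃: ℤ⁴ → ℤ⁴ given by the matrix with rows (1, 1, −1, 0), (0, 0, 0, 1), (3, 0, −1, 3), (0, −1, 1, 0) is unimodular (its determinant has absolute value 1), and its ℝ-linear extension maps the cone ω₃ generated by (1,0,0,0), (0,1,0,0), (1,2,3,0), (0,0,0,1), (0,3,3,1) onto the cone generated by (0,0,0,1), (0,1,0,0), (0,1,3,0), (1,0,0,−1), (1,0,3,0); equivalently, U₃(ω₃ ∩ ℤ⁴) equals the intersection of the latter cone with ℤ⁴. -/

import Mathlib

/-- Coercion of an integer vector to a real vector. -/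
def toR (v : Fin 4 → ℤ) : Fin 4 → ℝ := fun j => (v j : ℝ)

/-- The convex cone generated by a finite family of vectors in `ℝ⁴`. -/
def cone {n : ℕ} (v : Fin n → (Fin 4 → ℝ)) : Set (Fin 4 → ℝ) :=
  {x | ∃ lam : Fin n → ℝ, (∀ i, 0 ≤ lam i) ∧ x = ∑ i, lam i • v i}

/-- The cone `ω₃` generated by `(1,0,0,0), (0,1,0,0), (1,2,3,0), (0,0,0,1), (0,3,3,1)`. -/
def ω₃ : Set (Fin 4 → ℝ) :=
  cone ![toR ![1,0,0,0], toR ![0,1,0,0], toR ![1,2,3,0], toR ![0,0,0,1], toR ![0,3,3,1]]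

/-- The cone generated by `(0,0,0,1), (0,1,0,0), (0,1,3,0), (1,0,0,−1), (1,0,3,0)`. -/
def ω₃'' : Set (Fin 4 → ℝ) :=
  cone ![toR ![0,0,0,1], toR ![0,1,0,0], toR ![0,1,3,0], toR ![1,0,0,-1], toR ![1,0,3,0]]

/-- The matrix `U₃` (acting on column vectors). -/
def U₃ : Matrix (Fin 4) (Fin 4) ℤ :=
  !![1, 1, -1, 0;
     0, 0, 0, 1;
     3, 0, -1, 3;
     0, -1, 1, 0]

/-- The inverse of `U₃`. -/
def V₃ : Matrix (Fin 4) (Fin 4) ℤ :=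
  !![1, 0, 0, 1;
     3, 3, -1, 2;
     3, 3, -1, 3;
     0, 1, 0, 0]

lemma U₃_mul_V₃ : U₃ * V₃ = 1 := by
  decide

lemma V₃_mul_U₃ : V₃ * U₃ = 1 := by
  decide

/-- Image of a cone under a matrix that permutes the generators. -/
lemma cone_image {n : ℕ} (M : Matrix (Fin 4) (Fin 4) ℝ)
    (v w : Fin n → (Fin 4 → ℝ)) (τ : Equiv.Perm (Fin n))
    (h : ∀ i, M.mulVec (v i) = w (τ i)) :
    (fun x => M.mulVec x) '' cone v = cone w := by
  ext y
  constructor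
  · rintro ⟨x, ⟨lam, hlam, rfl⟩, rfl⟩
    refine ⟨fun j => lam (τ.symm j), fun j => hlam _, ?_⟩
    dsimp only
    have : M.mulVec (∑ i, lam i • v i) = ∑ i, lam i • w (τ i) := by
      rw [← M.mulVecLin_apply, map_sum]
      simp [Matrix.mulVecLin_apply, Matrix.mulVec_smul, h]
    rw [this, ← Equiv.sum_comp τ (fun j => lam (τ.symm j) • w j)]
    simp
  · rintro ⟨mu, hmu, rfl⟩
    refine ⟨∑ i, mu (τ i) • v i, ⟨fun i => mu (τ i), fun i => hmu _, rfl⟩, ?_⟩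
    dsimp only
    have : M.mulVec (∑ i, mu (τ i) • v i) = ∑ i, mu (τ i) • w (τ i) := by
      rw [← M.mulVecLin_apply, map_sum]
      simp [Matrix.mulVecLin_apply, Matrix.mulVec_smul, h]
    rw [this, ← Equiv.sum_comp τ (fun j => mu j • w j)]

/-- The permutation sending each `ω₃` generator index to the
corresponding `ω₃''` generator index. -/
def τ₃ : Equiv.Perm (Fin 5) :=
  ⟨![4, 3, 0, 2, 1], ![2, 4, 3, 1, 0], by decide, by decide⟩

lemma toR_mulVec (v : Fin 4 → ℤ) :
    toR (U₃.mulVec v) = (U₃.map (Int.cast : ℤ → ℝ)).mulVec (toR v) := by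
  funext j
  simp [toR, Matrix.mulVec, dotProduct, Matrix.map_apply]

lemma image_cone :
    (fun x => (U₃.map (Int.cast : ℤ → ℝ)).mulVec x) '' ω₃ = ω₃'' := by
  apply cone_image _ _ _ τ₃
  intro i
  fin_cases i <;>
    · funext j
      fin_cases j <;>
        norm_num [U₃, τ₃, toR, Matrix.mulVec, dotProduct, Matrix.map_apply,
          Fin.sum_univ_succ, Matrix.vecHead, Matrix.vecTail] <;> rfl

theorem stmt_18 :
    |U₃.det| = 1 ∧
    (fun x => (U₃.map (Int.cast : ℤ → ℝ)).mulVec x) '' ω₃ = ω₃'' ∧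
    (fun v => U₃.mulVec v) '' {v : Fin 4 → ℤ | toR v ∈ ω₃} = {v : Fin 4 → ℤ | toR v ∈ ω₃''} := by
  refine ⟨by decide, image_cone, ?_⟩
  ext v
  constructor
  · rintro ⟨w, hw, rfl⟩
    have : toR (U₃.mulVec w) ∈ ω₃'' := by
      rw [toR_mulVec, ← image_cone]
      exact ⟨toR w, hw, rfl⟩
    exact this
  · intro hv
    refine ⟨V₃.mulVec v, ?_, ?_⟩
    · -- toR (V₃.mulVec v) ∈ ω₃
      rw [← image_cone] at hv
      obtain ⟨x, hx, hxv⟩ := hv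
      dsimp only at hxv
      have hVU : (V₃.map (Int.cast : ℤ → ℝ)) * (U₃.map (Int.cast : ℤ → ℝ)) = 1 := by
        rw [show (Int.cast : ℤ → ℝ) = ⇑(Int.castRingHom ℝ) from rfl, ← Matrix.map_mul,
          V₃_mul_U₃]
        simp
      have : toR (V₃.mulVec v) = x := by
        have h1 : toR (V₃.mulVec v) = (V₃.map (Int.cast : ℤ → ℝ)).mulVec (toR v) := by
          funext j
          simp [toR, Matrix.mulVec, dotProduct, Matrix.map_apply]
        rw [h1, ← hxv, Matrix.mulVec_mulVec, hVU, Matrix.one_mulVec]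
      show toR (V₃.mulVec v) ∈ ω₃
      rw [this]
      exact hx
    · show U₃.mulVec (V₃.mulVec v) = v
      rw [Matrix.mulVec_mulVec, U₃_mul_V₃, Matrix.one_mulVec]
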